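/- arXiv:2007.08636 — 2 statements merged into one kernel-verified Lean document; each statement's English description precedes it below -/
import Mathlib

section
/- The ω-power of the language S₁ := {s ∈ 2^{<ω} nonempty : s(0) = 0, or there exists k with 1·0^k·1 a prefix of s} equals 2^ω \ {1 0^ω}; consequently S₁^∞ is open but not closed in 2^ω. -/
/-- `IsConcat w α` : the infinite word `α` is the concatenation `w 0 ++ w 1 ++ …`
of the sequence of finite words `w`. -/
def IsConcat {σ : Type*} (w : ℕ → List σ) (α : ℕ → σ) : Prop :=
  ∀ i k (h : k < (w i).length),
    α ((∑ j ∈ Finset.range i, (w j).length) + k) = (w i).get ⟨k, h⟩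

/-- The ω-power `L^∞` of a finitary language `L`. -/
def omegaPower {σ : Type*} (L : Set (List σ)) : Set (ℕ → σ) :=
  { α | ∃ w : ℕ → List σ, (∀ i, w i ∈ L) ∧ IsConcat w α }

def seg (α : ℕ → Bool) (a b : ℕ) : List Bool := List.ofFn fun k : Fin (b - a) => α (a + k)

def S1 : Set (List Bool) :=
  { s : List Bool | s ≠ [] ∧
      (s.head? = some false ∨
        ∃ k : ℕ, (true :: (List.replicate k false ++ [true])) <+: s) }

lemma length_seg (α : ℕ → Bool) (a b : ℕ) : (seg α a b).length = b - a := by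
  simp [seg]

lemma getElem_seg (α : ℕ → Bool) (a b k : ℕ) (h : k < (seg α a b).length) :
    (seg α a b)[k] = α (a + k) := by
  simp [seg]

lemma isConcat_seg (α : ℕ → Bool) (c : ℕ → ℕ) (hc : Monotone c) (h0 : c 0 = 0) :
    IsConcat (fun i => seg α (c i) (c (i+1))) α := by
  intro i k h
  have hsum : ∀ n, ∑ j ∈ Finset.range n, (seg α (c j) (c (j+1))).length = c n := by
    intro n
    induction n with
    | zero => simp [h0]
    | succ m ih =>
      rw [Finset.sum_range_succ, ih, length_seg]
      have := hc (Nat.le_succ m)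
      simp only [Nat.succ_eq_add_one] at *
      omega
  rw [List.get_eq_getElem, getElem_seg, hsum]

lemma pattern_prefix (s : List Bool) (k : ℕ) (hlen : k + 2 ≤ s.length)
    (h0 : s[0]'(by omega) = true)
    (hmid : ∀ j (hj : j < s.length), 0 < j → j < k + 1 → s[j] = false)
    (hk : s[k+1]'(by omega) = true) :
    (true :: (List.replicate k false ++ [true])) <+: s := by
  have heq : true :: (List.replicate k false ++ [true]) = s.take (k+2) := by
    apply List.ext_getElem
    · simp; omega
    · intro j h1 h2
      have hc1 : (true :: (List.replicate k false ++ [true])).length = k + 2 := by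
        simp
      rw [List.getElem_take]
      cases j with
      | zero => simpa using h0.symm
      | succ j' =>
        rw [List.getElem_cons_succ]
        rcases Nat.lt_or_ge j' k with h | h
        · rw [List.getElem_append_left (by simpa using h), List.getElem_replicate]
          exact (hmid (j'+1) (by omega) (by omega) (by omega)).symm
        · have hj' : j' = k := by omega
          subst hj'
          rw [List.getElem_concat_length (by simp)]
          exact hk.symm
  rw [heq]; exact List.take_prefix _ _

lemma seg_ne_nil (α : ℕ → Bool) {a b : ℕ} (hab : a < b) : seg α a b ≠ [] :=
  List.ne_nil_of_length_pos (by rw [length_seg]; omega)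

lemma seg_mem_false (α : ℕ → Bool) {a b : ℕ} (hab : a < b) (ha : α a = false) :
    seg α a b ∈ S1 := by
  refine ⟨seg_ne_nil α hab, Or.inl ?_⟩
  rw [List.head?_eq_head (seg_ne_nil α hab), List.head_eq_getElem,
    getElem_seg α a b 0 (by rw [length_seg]; omega)]
  simpa using ha

lemma seg_mem_true (α : ℕ → Bool) {a b m : ℕ} (ham : a < m) (hmb : m < b)
    (ha : α a = true) (hm : α m = true) (hmid : ∀ j, a < j → j < m → α j = false) :
    seg α a b ∈ S1 := by
  have hab : a < b := ham.trans hmb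
  refine ⟨seg_ne_nil α hab, Or.inr ⟨m - a - 1, ?_⟩⟩
  have hlen : (m - a - 1) + 2 ≤ (seg α a b).length := by rw [length_seg]; omega
  apply pattern_prefix _ _ hlen
  · rw [getElem_seg α a b 0 (by omega)]; simpa using ha
  · intro j hj hj0 hjk
    rw [getElem_seg α a b j hj]
    exact hmid (a + j) (by omega) (by rw [length_seg] at hj; omega)
  · rw [getElem_seg α a b _ (by omega)]
    have : a + ((m - a - 1) + 1) = m := by omega
    rw [this]; exact hm

lemma mem_omegaPower_of_ne (α : ℕ → Bool)
    (hα : α ≠ fun n : ℕ => if n = 0 then true else false) :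
    α ∈ omegaPower S1 := by
  classical
  by_cases hInf : ({n | α n = true} : Set ℕ).Infinite
  · -- infinitely many trues
    set p : ℕ → Prop := fun n => α n = true with hp
    have hpInf : (setOf p).Infinite := hInf
    set t : ℕ → ℕ := Nat.nth p with ht
    have hmono : StrictMono t := Nat.nth_strictMono hpInf
    have hmem : ∀ i, α (t i) = true := fun i => Nat.nth_mem_of_infinite hpInf i
    have hsurj : ∀ m, α m = true → ∃ j, t j = m := by
      intro m hm
      exact ⟨Nat.count p m, Nat.nth_count hm⟩
    have hbetween : ∀ i m, t i < m → m < t (i + 1) → α m = false := by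
      intro i m h1 h2
      by_contra h
      have hm : α m = true := by
        cases hαm : α m
        · exact absurd hαm h
        · rfl
      obtain ⟨j, hj⟩ := hsurj m hm
      rcases lt_trichotomy j i with hlt | rfl | hgt
      · have := hmono hlt; omega
      · omega
      · have : i + 1 ≤ j := hgt
        have := hmono.monotone this; omega
    by_cases h0 : α 0 = true
    · have ht0 : t 0 = 0 := by
        rw [ht, Nat.nth_zero]
        exact Nat.sInf_eq_zero.mpr (Or.inl h0)
      refine ⟨fun i => seg α (t (2 * i)) (t (2 * (i + 1))), ?_,
        isConcat_seg α (fun i => t (2 * i)) (fun i j hij => hmono.monotone (by omega)) (by simpa using ht0)⟩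
      intro i
      refine seg_mem_true α (m := t (2 * i + 1)) (hmono (by omega)) (hmono (by omega))
        (hmem _) (hmem _) ?_
      intro j hj1 hj2
      exact hbetween (2 * i) j hj1 hj2
    · have h0' : α 0 = false := by
        cases hαm : α 0
        · rfl
        · exact absurd hαm h0
      have ht0pos : 0 < t 0 := by
        rcases Nat.eq_zero_or_pos (t 0) with h | h
        · have := hmem 0; rw [h, h0'] at this; exact absurd this (by simp)
        · exact h
      set c : ℕ → ℕ := fun i => if i = 0 then 0 else t (2 * (i - 1)) with hcdef
      have hc0 : c 0 = 0 := by simp [hcdef]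
      have hcmono : Monotone c := by
        apply monotone_nat_of_le_succ
        intro n
        cases n with
        | zero => simp [hcdef]
        | succ m =>
          simp only [hcdef, Nat.succ_ne_zero, if_false, Nat.add_sub_cancel]
          exact hmono.monotone (by omega)
      refine ⟨fun i => seg α (c i) (c (i + 1)), ?_, isConcat_seg α c hcmono hc0⟩
      intro i
      cases i with
      | zero =>
        show seg α (c 0) (c 1) ∈ S1
        have h2 : c 1 = t 0 := by
          simp only [hcdef]; rw [if_neg (by omega)]
        rw [hc0, h2]
        exact seg_mem_false α ht0pos h0'
      | succ n =>
        show seg α (c (n + 1)) (c (n + 2)) ∈ S1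
        have h1 : c (n + 1) = t (2 * n) := by
          simp only [hcdef]; rw [if_neg (by omega)]; congr 1
        have h2 : c (n + 2) = t (2 * n + 2) := by
          simp only [hcdef]; rw [if_neg (by omega)]; congr 1
        rw [h1, h2]
        refine seg_mem_true α (m := t (2 * n + 1)) (hmono (by omega)) (hmono (by omega))
          (hmem _) (hmem _) ?_
        intro j hj1 hj2
        exact hbetween (2 * n) j hj1 hj2
  · -- finitely many trues
    have hFin : ({n | α n = true} : Set ℕ).Finite := Set.not_infinite.mp hInf
    obtain ⟨B, hB⟩ := hFin.bddAbove
    have hbound : ∀ n, B < n → α n = false := by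
      intro n hn
      cases hαn : α n
      · rfl
      · exact absurd (hB hαn) (by omega)
    by_cases h0 : α 0 = true
    · -- there is a second true
      have hex : ∃ m, 0 < m ∧ α m = true := by
        obtain ⟨n, hn⟩ := Function.ne_iff.mp hα
        rcases Nat.eq_zero_or_pos n with rfl | hpos
        · simp [h0] at hn
        · refine ⟨n, hpos, ?_⟩
          cases hαn : α n
          · rw [if_neg (by omega), hαn] at hn; exact absurd rfl hn
          · rfl
      set m := Nat.find hex with hmdef
      obtain ⟨hmpos, hmtrue⟩ := Nat.find_spec hex
      have hmmin : ∀ j, 0 < j → j < m → α j = false := by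
        intro j hj1 hj2
        have := Nat.find_min hex hj2
        cases hαj : α j
        · rfl
        · exact absurd ⟨hj1, hαj⟩ this
      set N := max (B + 1) (m + 1) with hNdef
      set c : ℕ → ℕ := fun i => if i = 0 then 0 else N + (i - 1) with hcdef
      have hc0 : c 0 = 0 := by simp [hcdef]
      have hcmono : Monotone c := by
        apply monotone_nat_of_le_succ
        intro n
        cases n with
        | zero => simp [hcdef]
        | succ k => simp [hcdef]
      refine ⟨fun i => seg α (c i) (c (i + 1)), ?_, isConcat_seg α c hcmono hc0⟩
      intro i
      cases i with
      | zero =>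
        show seg α (c 0) (c 1) ∈ S1
        have h2 : c 1 = N := by
          simp only [hcdef]; rw [if_neg (by omega)]; omega
        rw [hc0, h2]
        exact seg_mem_true α (m := m) hmpos (by omega) h0 hmtrue hmmin
      | succ n =>
        show seg α (c (n + 1)) (c (n + 2)) ∈ S1
        have h1 : c (n + 1) = N + n := by
          simp only [hcdef]; rw [if_neg (by omega)]; omega
        have h2 : c (n + 2) = N + (n + 1) := by
          simp only [hcdef]; rw [if_neg (by omega)]; omega
        rw [h1, h2]
        exact seg_mem_false α (by omega) (hbound _ (by omega))
    · have h0' : α 0 = false := by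
        cases hαm : α 0
        · rfl
        · exact absurd hαm h0
      set N := B + 1 with hNdef
      set c : ℕ → ℕ := fun i => if i = 0 then 0 else N + (i - 1) with hcdef
      have hc0 : c 0 = 0 := by simp [hcdef]
      have hcmono : Monotone c := by
        apply monotone_nat_of_le_succ
        intro n
        cases n with
        | zero => simp [hcdef]
        | succ k => simp [hcdef]
      refine ⟨fun i => seg α (c i) (c (i + 1)), ?_, isConcat_seg α c hcmono hc0⟩
      intro i
      cases i with
      | zero =>
        show seg α (c 0) (c 1) ∈ S1
        have h2 : c 1 = N := by
          simp only [hcdef]; rw [if_neg (by omega)]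
        rw [hc0, h2]
        exact seg_mem_false α (by omega) h0'
      | succ n =>
        show seg α (c (n + 1)) (c (n + 2)) ∈ S1
        have h1 : c (n + 1) = N + n := by
          simp only [hcdef]; rw [if_neg (by omega)]; omega
        have h2 : c (n + 2) = N + (n + 1) := by
          simp only [hcdef]; rw [if_neg (by omega)]; omega
        rw [h1, h2]
        exact seg_mem_false α (by omega) (hbound _ (by omega))

lemma ne_of_mem_omegaPower (α : ℕ → Bool) (h : α ∈ omegaPower S1) :
    α ≠ fun n : ℕ => if n = 0 then true else false := by
  obtain ⟨w, hw, hconc⟩ := h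
  intro heq
  obtain ⟨hne, hd⟩ := hw 0
  have hαk : ∀ k (h : k < (w 0).length), α k = (w 0)[k] := by
    intro k hk
    have := hconc 0 k hk
    simpa using this
  have hlpos : 0 < (w 0).length := List.length_pos_iff.mpr hne
  have hα0 : α 0 = true := by rw [heq]; simp
  have hw00 : (w 0)[0]'hlpos = true := by rw [← hαk 0 hlpos]; exact hα0
  rcases hd with hd | ⟨k, hpre⟩
  · rw [List.head?_eq_head hne, List.head_eq_getElem, hw00] at hd
    simp at hd
  · have hlen := hpre.length_le
    simp only [List.length_cons, List.length_append, List.length_replicate,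
      List.length_singleton] at hlen
    have hk1 : k + 1 < (w 0).length := by omega
    have hpat : (true :: (List.replicate k false ++ [true]))[k+1]'(by simp) = true := by
      rw [List.getElem_cons_succ]
      rw [List.getElem_concat_length (by simp)]
    have := hpre.getElem (i := k + 1) (by simp)
    rw [hpat] at this
    have hαk1 : α (k + 1) = true := by rw [hαk (k+1) hk1, ← this]
    rw [heq] at hαk1
    simp at hαk1

/-- The ω-power of S₁ = {s nonempty : s begins with 0, or 1 0^k 1 is a prefix of s}
equals 2^ω \ {1 0^ω}; hence it is open but not closed (`false` = 0, `true` = 1). -/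
theorem stmt7 :
    omegaPower { s : List Bool | s ≠ [] ∧
        (s.head? = some false ∨
          ∃ k : ℕ, (true :: (List.replicate k false ++ [true])) <+: s) } =
      {fun n : ℕ => if n = 0 then true else false}ᶜ ∧
    IsOpen (({fun n : ℕ => if n = 0 then true else false}ᶜ : Set (ℕ → Bool))) ∧
    ¬ IsClosed (({fun n : ℕ => if n = 0 then true else false}ᶜ : Set (ℕ → Bool))) := by
  refine ⟨?_, isOpen_compl_singleton, ?_⟩
  · ext α
    simp only [Set.mem_compl_iff, Set.mem_singleton_iff]
    exact ⟨ne_of_mem_omegaPower α, mem_omegaPower_of_ne α⟩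
  · intro hcl
    set bad : ℕ → Bool := fun n : ℕ => if n = 0 then true else false with hbad
    set x : ℕ → ℕ → Bool := fun k n => if n = 0 then true else if n = k + 1 then true else false
      with hx
    have htend : Filter.Tendsto x Filter.atTop (nhds bad) := by
      rw [tendsto_pi_nhds]
      intro n
      apply Filter.Tendsto.congr' (f₁ := fun _ => bad n)
      · rw [Filter.EventuallyEq, Filter.eventually_atTop]
        exact ⟨n, fun k hk => by simp [hx, hbad]; intro h1; omega⟩
      · exact tendsto_const_nhds
    have hmem : ∀ k, x k ∈ ({bad}ᶜ : Set (ℕ → Bool)) := by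
      intro k
      simp only [Set.mem_compl_iff, Set.mem_singleton_iff]
      intro h
      have := congrFun h (k + 1)
      simp [hx, hbad] at this
    have := hcl.mem_of_tendsto htend (Filter.Eventually.of_forall hmem)
    simp at this
end

section
/- If A ⊆ Σ_A^ω is the ω-power of a language L_A ⊆ Σ_A⁺ and h is the substitution sending each letter a ∈ Σ_A to the language L₃·a (with L₃ ⊆ Σ^{<ω} a fixed language over Σ = Σ_A ∪ {↢}), then h(L_A)^∞ = h̃(A), where h̃ is the induced substitution on ω-words; in particular the class of ω-powers is closed under the substitution operation a ↦ L₃·a. -/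
/-- Substitution applied to a finite word: the set of words obtained by
replacing each letter `a` by some word of `h a`. -/
def substWord {σA σ : Type*} (h : σA → Set (List σ)) : List σA → Set (List σ)
  | [] => {([] : List σ)}
  | a :: t => { u | ∃ x ∈ h a, ∃ y ∈ substWord h t, u = x ++ y }

/-- Substitution applied to a language. -/
def substLang {σA σ : Type*} (h : σA → Set (List σ)) (L : Set (List σA)) :
    Set (List σ) :=
  ⋃ w ∈ L, substWord h w

/-- The substitution induced on ω-words: `β ∈ h̃(A)` iff `β` is obtained from
some `α ∈ A` by replacing, letter by letter, each letter `α i` by a word of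
`h (α i)`. -/
def omegaSubst {σA σ : Type*} (h : σA → Set (List σ)) (A : Set (ℕ → σA)) :
    Set (ℕ → σ) :=
  { β | ∃ α ∈ A, ∃ v : ℕ → List σ, (∀ i, v i ∈ h (α i)) ∧ IsConcat v β }

namespace Stmt12Aux

variable {σA σ : Type*}

/-- prefix sums of lengths -/
def S (w : ℕ → List σ) (n : ℕ) : ℕ := ∑ j ∈ Finset.range n, (w j).length

/-- concatenation of the first `n` words -/
def J (w : ℕ → List σ) (n : ℕ) : List σ := ((List.range n).map w).flatten

/-- prefix of an infinite word -/
def pref (α : ℕ → σ) (n : ℕ) : List σ := List.ofFn (fun k : Fin n => α k)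

lemma isConcat_S {w : ℕ → List σ} {α : ℕ → σ} :
    IsConcat w α ↔ ∀ i k (hk : k < (w i).length),
      α (S w i + k) = (w i).get ⟨k, hk⟩ := Iff.rfl

lemma S_succ (w : ℕ → List σ) (n : ℕ) : S w (n + 1) = S w n + (w n).length :=
  Finset.sum_range_succ _ _

lemma S_mono (w : ℕ → List σ) : Monotone (S w) := fun _ _ hab =>
  Finset.sum_le_sum_of_subset (Finset.range_subset_range.mpr hab)

lemma J_succ (w : ℕ → List σ) (n : ℕ) : J w (n+1) = J w n ++ w n := by
  simp [J, List.range_succ]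

lemma length_J (w : ℕ → List σ) (n : ℕ) : (J w n).length = S w n := by
  induction n with
  | zero => simp [J, S]
  | succ n ih => rw [J_succ, S_succ, List.length_append, ih]

lemma length_pref (α : ℕ → σ) (n : ℕ) : (pref α n).length = n := by simp [pref]

lemma pref_add (α : ℕ → σ) (m n : ℕ) :
    pref α (m + n) = pref α m ++ List.ofFn (fun k : Fin n => α (m + k)) := by
  simp only [pref, List.ofFn_add]
  rfl

lemma pref_take (α : ℕ → σ) {m n : ℕ} (hmn : m ≤ n) :
    pref α m = (pref α n).take m := by
  rw [show n = m + (n - m) by omega, pref_add, List.take_left' (length_pref α m)]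

lemma isConcat_iff {w : ℕ → List σ} {α : ℕ → σ} :
    IsConcat w α ↔ ∀ n, pref α (S w n) = J w n := by
  constructor
  · intro hc n
    induction n with
    | zero => simp [pref, S, J]
    | succ n ih =>
      rw [S_succ, pref_add, J_succ, ih]
      congr 1
      apply List.ext_get (by simp)
      intro k h1 h2
      rw [List.get_ofFn]
      exact hc n k h2
  · intro hp i k hk
    have h2 := hp (i + 1)
    rw [S_succ, pref_add, J_succ, hp i] at h2
    have h3 := List.append_cancel_left h2
    have hk' : k < (List.ofFn fun j : Fin (w i).length => α (S w i + j)).length := by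
      simpa using hk
    have := List.get_of_eq h3 ⟨k, hk'⟩
    rw [List.get_ofFn] at this
    exact this

lemma J_add (v : ℕ → List σ) (m t : ℕ) :
    J v (m + t) = J v m ++ (List.ofFn (fun k : Fin t => v (m + k))).flatten := by
  induction t with
  | zero => simp
  | succ t ih =>
    rw [show m + (t+1) = (m+t)+1 by omega, J_succ, ih, List.ofFn_succ']
    simp [List.flatten_concat, List.append_assoc]

lemma J_regroup (v : ℕ → List σ) (t : ℕ → ℕ) (n : ℕ) :
    J (fun i => (List.ofFn (fun k : Fin (t i) =>
        v ((∑ j ∈ Finset.range i, t j) + k))).flatten) n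
      = J v (∑ j ∈ Finset.range n, t j) := by
  induction n with
  | zero => simp [J]
  | succ n ih => rw [J_succ, ih, Finset.sum_range_succ, J_add]

lemma mem_substWord_iff (h : σA → Set (List σ)) (wv : List σA) (u : List σ) :
    u ∈ substWord h wv ↔ ∃ p : Fin wv.length → List σ,
      (∀ k, p k ∈ h (wv.get k)) ∧ u = (List.ofFn p).flatten := by
  induction wv generalizing u with
  | nil =>
    constructor
    · intro hu
      refine ⟨fun k => k.elim0, fun k => k.elim0, ?_⟩
      simpa [substWord] using hu
    · rintro ⟨p, -, rfl⟩
      simp [substWord]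
  | cons a t ih =>
    constructor
    · rintro ⟨x, hx, y, hy, rfl⟩
      obtain ⟨q, hq1, rfl⟩ := (ih y).mp hy
      refine ⟨Fin.cons x q, ?_, ?_⟩
      · intro k
        refine Fin.cases ?_ ?_ k
        · simpa using hx
        · intro j
          simpa using hq1 j
      · rw [List.ofFn_succ]
        simp
    · rintro ⟨p, hp, rfl⟩
      refine ⟨p ⟨0, by simp⟩, by simpa using hp ⟨0, by simp⟩,
        (List.ofFn (fun j : Fin t.length => p j.succ)).flatten,
        (ih _).mpr ⟨fun j => p j.succ, fun j => by simpa using hp j.succ, rfl⟩, ?_⟩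
      rw [List.ofFn_succ]
      simp

end Stmt12Aux

open Stmt12Aux in
/-- If `h` is the substitution `a ↦ L₃·a` (each letter `a` of `Σ_A`, embedded in
`Σ` via `ι`, is replaced by the words of `L₃` followed by the letter `a`), and
`A = L_A^∞` is an ω-power, then `(h(L_A))^∞ = h̃(A)`: the class of ω-powers is
closed under this substitution operation. -/
theorem stmt12 {σA σ : Type*} (ι : σA → σ) (L₃ : Set (List σ))
    (LA : Set (List σA)) (hLA : ∀ w ∈ LA, w ≠ [])
    (h : σA → Set (List σ)) (hh : ∀ a : σA, h a = (fun l => l ++ [ι a]) '' L₃) :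
    omegaPower (substLang h LA) = omegaSubst h (omegaPower LA) := by
  apply Set.Subset.antisymm
  · -- ⊆ : a concatenation of substituted words is a substitution of a concatenation
    rintro β ⟨u, hu, huβ⟩
    have hex : ∀ i, ∃ wi, wi ∈ LA ∧ u i ∈ substWord h wi := by
      intro i
      have := hu i
      simpa [substLang, Set.mem_iUnion] using this
    choose w hwLA hww using hex
    choose p hp1 hp2 using fun i => (mem_substWord_iff h (w i) (u i)).mp (hww i)
    -- index machinery
    have hlen : ∀ i, 1 ≤ (w i).length := fun i =>
      List.length_pos_iff.mpr (hLA _ (hwLA i))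
    have hTpos : ∀ n, n ≤ S w n := by
      intro n
      calc n = ∑ _j ∈ Finset.range n, 1 := by simp
        _ ≤ S w n := Finset.sum_le_sum fun j _ => hlen j
    set idx : ℕ → ℕ := fun m => Nat.findGreatest (fun j => S w j ≤ m) m with hidxdef
    have hidx1 : ∀ m, S w (idx m) ≤ m := fun m =>
      @Nat.findGreatest_spec 0 (fun j => S w j ≤ m) _ m (Nat.zero_le m) (by simp [S])
    have hidx2 : ∀ m, m < S w (idx m + 1) := by
      intro m
      by_contra hcon
      push_neg at hcon
      have h1 : idx m + 1 ≤ m := le_trans (hTpos _) hcon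
      have h2 := @Nat.le_findGreatest (idx m + 1) (fun j => S w j ≤ m) _ m h1 hcon
      simp only [hidxdef] at h2
      omega
    have hkb : ∀ m, m - S w (idx m) < (w (idx m)).length := by
      intro m
      have h1 := hidx1 m
      have h2 := hidx2 m
      have h3 := S_succ w (idx m)
      omega
    have hidx_eq : ∀ n j, j < (w n).length → idx (S w n + j) = n := by
      intro n j hj
      have hle : n ≤ idx (S w n + j) :=
        @Nat.le_findGreatest n (fun i => S w i ≤ S w n + j) _ _
          (le_trans (hTpos n) (Nat.le_add_right _ _)) (Nat.le_add_right _ _)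
      have hlt : idx (S w n + j) < n + 1 := by
        by_contra hcon
        push_neg at hcon
        have hm := S_mono w hcon
        have hs := S_succ w n
        have := hidx1 (S w n + j)
        omega
      omega
    set α : ℕ → σA := fun m => (w (idx m)).get ⟨m - S w (idx m), hkb m⟩ with hαdef
    set v : ℕ → List σ := fun m => p (idx m) ⟨m - S w (idx m), hkb m⟩ with hvdef
    have keyα : ∀ m i k (hk : k < (w i).length), m = S w i + k →
        α m = (w i).get ⟨k, hk⟩ := by
      intro m i k hk hm
      have h1 : idx m = i := by rw [hm]; exact hidx_eq i k hk
      subst h1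
      have h2 : m - S w (idx m) = k := by
        have := hidx1 m
        omega
      show (w (idx m)).get ⟨m - S w (idx m), hkb m⟩ = _
      subst h2
      rfl
    have keyv : ∀ m i k (hk : k < (w i).length), m = S w i + k →
        v m = p i ⟨k, hk⟩ := by
      intro m i k hk hm
      have h1 : idx m = i := by rw [hm]; exact hidx_eq i k hk
      subst h1
      have h2 : m - S w (idx m) = k := by
        have := hidx1 m
        omega
      show p (idx m) ⟨m - S w (idx m), hkb m⟩ = _
      subst h2
      rfl
    have hwα : IsConcat w α := by
      rw [isConcat_S]
      intro i k hk
      exact keyα _ i k hk rfl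
    refine ⟨α, ⟨w, hwLA, hwα⟩, v, ?_, ?_⟩
    · intro m
      have hm : m = S w (idx m) + (m - S w (idx m)) := by
        have := hidx1 m
        omega
      rw [keyv m (idx m) _ (hkb m) hm, keyα m (idx m) _ (hkb m) hm]
      exact hp1 _ _
    · -- IsConcat v β
      have hu' : u = fun n => (List.ofFn fun k : Fin ((w n).length) =>
          v (S w n + ↑k)).flatten := by
        funext n
        rw [hp2 n]
        exact congrArg (fun f => (List.ofFn f).flatten)
          (funext fun k => (keyv _ n k k.isLt rfl).symm)
      have hJu : ∀ n, J u n = J v (S w n) := by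
        intro n
        rw [hu']
        exact J_regroup v (fun i => (w i).length) n
      have hSu : ∀ n, S u n = S v (S w n) := by
        intro n
        rw [← length_J, hJu, length_J]
      rw [isConcat_iff]
      intro m
      have h1 : S v m ≤ S v (S w m) := S_mono v (hTpos m)
      calc pref β (S v m) = (pref β (S v (S w m))).take (S v m) := pref_take β h1
        _ = (pref β (S u m)).take (S v m) := by rw [hSu]
        _ = (J u m).take (S v m) := by rw [isConcat_iff.mp huβ m]
        _ = (J v (S w m)).take (S v m) := by rw [hJu]
        _ = (J v m ++ (List.ofFn fun k : Fin (S w m - m) =>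
              v (m + ↑k)).flatten).take (S v m) := by
            rw [← J_add, show m + (S w m - m) = S w m by have := hTpos m; omega]
        _ = J v m := List.take_left' (length_J v m)
  · -- ⊇ : a substitution of a concatenation is a concatenation of substituted words
    rintro β ⟨α, ⟨w, hw, hwα⟩, v, hv, hvβ⟩
    refine ⟨fun i => (List.ofFn (fun k : Fin (w i).length =>
        v (S w i + ↑k))).flatten, ?_, ?_⟩
    · intro i
      have : (List.ofFn (fun k : Fin (w i).length => v (S w i + ↑k))).flatten
          ∈ substWord h (w i) := by
        rw [mem_substWord_iff]
        refine ⟨fun k => v (S w i + ↑k), fun k => ?_, rfl⟩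
        rw [← isConcat_S.mp hwα i k k.isLt]
        exact hv _
      simp only [substLang, Set.mem_iUnion]
      exact ⟨w i, hw i, this⟩
    · rw [isConcat_iff]
      intro n
      have hJ : J (fun i => (List.ofFn (fun k : Fin (w i).length =>
          v (S w i + ↑k))).flatten) n = J v (S w n) :=
        J_regroup v (fun i => (w i).length) n
      have hS : S (fun i => (List.ofFn (fun k : Fin (w i).length =>
          v (S w i + ↑k))).flatten) n = S v (S w n) := by
        rw [← length_J, hJ, length_J]
      rw [hS, hJ]
      exact isConcat_iff.mp hvβ (S w n)
end
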